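/- arXiv:1307.4203 — 2 statements merged into one kernel-verified Lean document; each statement's English description precedes it below -/
import Mathlib

section
/- Let G ⊆ ℂ be a simply connected domain whose boundary contains more than one point, and let ψ be a univalent analytic map from the open unit disk D onto G. If ψ extends continuously to the closed unit disk, then every boundary point of G is accessible, i.e., ∂G = ∂ₐG. -/
/-- `J` is a crosscut of `G`: `J = γ((0,1))` for a continuous injective
`γ : [0,1] → ℂ` with `γ((0,1)) ⊆ G` and endpoints `γ 0, γ 1 ∈ ∂G`. -/
def IsCrosscut (G J : Set ℂ) : Prop :=
  ∃ γ : ℝ → ℂ, ContinuousOn γ (Set.Icc 0 1) ∧ Set.InjOn γ (Set.Icc 0 1) ∧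
    J = γ '' Set.Ioo 0 1 ∧ J ⊆ G ∧ γ 0 ∈ frontier G ∧ γ 1 ∈ frontier G

/-- The set `∂ₐG` of accessible boundary points of `G`. -/
def accessiblePts (G : Set ℂ) : Set ℂ :=
  {a | a ∈ frontier G ∧ ∃ γ : ℝ → ℂ, ContinuousOn γ (Set.Icc 0 1) ∧
    Set.InjOn γ (Set.Icc 0 1) ∧ γ '' Set.Ico 0 1 ⊆ G ∧ γ 1 = a}

/-- The set `∂ₙG = ∂G \ ∂ₐG` of non-accessible boundary points of `G`. -/
def nonAccessiblePts (G : Set ℂ) : Set ℂ := frontier G \ accessiblePts G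

/-- The set `∂ₛₙG` of semi-unreachable boundary points of `G`. -/
def semiUnreachablePts (G : Set ℂ) : Set ℂ :=
  {a | a ∈ frontier G ∧ ∃ J U V : Set ℂ, IsCrosscut G J ∧
    IsOpen U ∧ IsOpen V ∧ IsConnected U ∧ IsConnected V ∧ Disjoint U V ∧
    G \ J = U ∪ V ∧ a ∈ (nonAccessiblePts U ∪ nonAccessiblePts V) \ J}

/-- `ψ` extends continuously to the closed unit disk. -/
def ExtendsContinuously (ψ : ℂ → ℂ) : Prop :=
  ∃ Ψ : ℂ → ℂ, ContinuousOn Ψ (Metric.closedBall (0 : ℂ) 1) ∧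
    Set.EqOn Ψ ψ (Metric.ball (0 : ℂ) 1)

theorem frontier_eq_accessible_of_psi_extends
    (G : Set ℂ) (hGopen : IsOpen G) (hGconn : IsConnected G)
    (hGsc : SimplyConnectedSpace ↥G) (hGbd : (frontier G).Nontrivial)
    (ψ : ℂ → ℂ) (hψd : DifferentiableOn ℂ ψ (Metric.ball (0 : ℂ) 1))
    (hψi : Set.InjOn ψ (Metric.ball (0 : ℂ) 1))
    (hψs : ψ '' Metric.ball (0 : ℂ) 1 = G)
    (hext : ExtendsContinuously ψ) :
    frontier G = accessiblePts G := by
  obtain ⟨Ψ, hΨc, hΨeq⟩ := hext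
  apply Set.Subset.antisymm
  · intro a ha
    have haG : a ∉ G := by
      rw [hGopen.frontier_eq] at ha; exact ha.2
    have hcl : closure G ⊆ Ψ '' Metric.closedBall 0 1 := by
      have hcomp : IsCompact (Ψ '' Metric.closedBall 0 1) :=
        (isCompact_closedBall 0 1).image_of_continuousOn hΨc
      apply closure_minimal _ hcomp.isClosed
      rw [← hψs]
      rintro z ⟨w, hw, rfl⟩
      exact ⟨w, Metric.ball_subset_closedBall hw, hΨeq hw⟩
    obtain ⟨w, hw, hwa⟩ := hcl (frontier_subset_closure ha)
    rw [Metric.mem_closedBall, dist_zero_right] at hw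
    have hw1 : ‖w‖ = 1 := by
      rcases lt_or_eq_of_le hw with h | h
      · exfalso
        have hwball : w ∈ Metric.ball (0 : ℂ) 1 := by
          rwa [Metric.mem_ball, dist_zero_right]
        apply haG
        rw [← hψs, ← hwa, hΨeq hwball]
        exact ⟨w, hwball, rfl⟩
      · exact h
    have hwne : w ≠ 0 := by
      intro h; rw [h, norm_zero] at hw1; norm_num at hw1
    set γ : ℝ → ℂ := fun t => Ψ ((t : ℂ) * w) with hγ
    have hnorm : ∀ t : ℝ, ‖(t : ℂ) * w‖ = |t| := by
      intro t
      rw [norm_mul, hw1, mul_one, Complex.norm_real, Real.norm_eq_abs]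
    have hball : ∀ t : ℝ, t ∈ Set.Ico (0:ℝ) 1 → (t : ℂ) * w ∈ Metric.ball (0 : ℂ) 1 := by
      intro t ht
      rw [Metric.mem_ball, dist_zero_right, hnorm, abs_of_nonneg ht.1]
      exact ht.2
    have hIcoG : γ '' Set.Ico 0 1 ⊆ G := by
      rintro z ⟨t, ht, rfl⟩
      rw [← hψs]
      have hb := hball t ht
      exact ⟨(t : ℂ) * w, hb, (hΨeq hb).symm⟩
    have hγ1 : γ 1 = a := by simp [hγ, hwa]
    refine ⟨ha, γ, ?_, ?_, hIcoG, hγ1⟩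
    · apply hΨc.comp
      · exact (Complex.continuous_ofReal.mul continuous_const).continuousOn
      · intro t ht
        rw [Metric.mem_closedBall, dist_zero_right, hnorm,
          abs_of_nonneg ht.1]
        exact ht.2
    · intro s hs t ht hst
      rcases eq_or_lt_of_le hs.2 with h1 | h1 <;>
        rcases eq_or_lt_of_le ht.2 with h2 | h2
      · rw [h1, h2]
      · exfalso
        apply haG
        have hG : γ t ∈ G := hIcoG ⟨t, ⟨ht.1, h2⟩, rfl⟩
        rw [h1, hγ1] at hst
        rwa [← hst] at hG
      · exfalso
        apply haG
        have hG : γ s ∈ G := hIcoG ⟨s, ⟨hs.1, h1⟩, rfl⟩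
        rw [h2, hγ1] at hst
        rwa [hst] at hG
      · have hbs := hball s ⟨hs.1, h1⟩
        have hbt := hball t ⟨ht.1, h2⟩
        have := hψi hbs hbt (by
          simpa only [hγ, hΨeq hbs, hΨeq hbt] using hst)
        have := mul_right_cancel₀ hwne this
        exact_mod_cast this
  · exact fun a ha => ha.1
end

section
/- If G ⊆ ℂ is a Jordan domain, then the set ∂ₐG of accessible boundary points of G is dense in ∂G. -/
/-- `Γ` is a Jordan curve: the image of an injective continuous map
from the unit circle into `ℂ`. -/
def IsJordanCurve (Γ : Set ℂ) : Prop :=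
  ∃ f : ℂ → ℂ, ContinuousOn f (Metric.sphere (0 : ℂ) 1) ∧
    Set.InjOn f (Metric.sphere (0 : ℂ) 1) ∧ Γ = f '' Metric.sphere (0 : ℂ) 1

/-- `G` is a Jordan domain: a bounded nonempty open connected set that is a
connected component of the complement of a Jordan curve `Γ` with `∂G = Γ`. -/
def IsJordanDomain (G : Set ℂ) : Prop :=
  IsOpen G ∧ IsConnected G ∧ Bornology.IsBounded G ∧
    ∃ Γ : Set ℂ, IsJordanCurve Γ ∧ frontier G = Γ ∧
      ∃ z ∈ G, G = connectedComponentIn Γᶜ z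

theorem accessible_dense_in_frontier_of_jordan
    (G : Set ℂ) (hG : IsJordanDomain G) :
    frontier G ⊆ closure (accessiblePts G) := by
  obtain ⟨hopen, -, -, -⟩ := hG
  intro a ha
  rw [hopen.frontier_eq] at ha
  obtain ⟨hacl, haG⟩ := ha
  rw [Metric.mem_closure_iff]
  intro ε hε
  obtain ⟨z, hzG, hz⟩ := Metric.mem_closure_iff.mp hacl ε hε
  -- the segment from z to a
  set f : ℝ → ℂ := fun t => z + (t : ℂ) * (a - z) with hf_def
  have hf : Continuous f := by fun_prop
  have haz : a - z ≠ 0 := sub_ne_zero.mpr (fun h => haG (h ▸ hzG))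
  set S : Set ℝ := Set.Icc 0 1 ∩ f ⁻¹' Gᶜ with hS_def
  have hSclosed : IsClosed S :=
    isClosed_Icc.inter (hopen.isClosed_compl.preimage hf)
  have h1S : (1 : ℝ) ∈ S := by
    constructor
    · exact ⟨zero_le_one, le_refl 1⟩
    · have : f 1 = a := by simp only [hf_def]; push_cast; ring
      simpa [this] using haG
  have hbdd : BddBelow S := ⟨0, fun t ht => ht.1.1⟩
  set t₀ : ℝ := sInf S with ht₀_def
  have ht₀ : t₀ ∈ S := hSclosed.csInf_mem ⟨1, h1S⟩ hbdd
  have ht₀1 : t₀ ≤ 1 := ht₀.1.2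
  have ht₀pos : 0 < t₀ := by
    rcases lt_or_eq_of_le ht₀.1.1 with h | h
    · exact h
    · exfalso
      apply ht₀.2
      simp only [Set.mem_preimage, hf_def, ← h]
      simpa using hzG
  have hIn : ∀ t : ℝ, 0 ≤ t → t < t₀ → f t ∈ G := by
    intro t h0 ht
    by_contra hc
    exact absurd (csInf_le hbdd ⟨⟨h0, ht.le.trans ht₀1⟩, hc⟩) (not_le.mpr ht)
  set b : ℂ := f t₀ with hb_def
  have hbG : b ∉ G := ht₀.2
  have hbcl : b ∈ closure G := by
    have h1 : t₀ ∈ closure (Set.Ico 0 t₀) := by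
      rw [closure_Ico (ne_of_lt ht₀pos)]
      exact ⟨ht₀pos.le, le_refl _⟩
    have h2 : b ∈ f '' closure (Set.Ico 0 t₀) := ⟨t₀, h1, rfl⟩
    have h3 : f '' closure (Set.Ico 0 t₀) ⊆ closure (f '' Set.Ico 0 t₀) :=
      image_closure_subset_closure_image hf
    refine closure_mono ?_ (h3 h2)
    rintro w ⟨t, ⟨h0, ht⟩, rfl⟩
    exact hIn t h0 ht
  have hbfr : b ∈ frontier G := by
    rw [hopen.frontier_eq]; exact ⟨hbcl, hbG⟩
  refine ⟨b, ?_, ?_⟩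
  · refine ⟨hbfr, fun s => f (s * t₀), hf.comp (by fun_prop) |>.continuousOn, ?_, ?_, ?_⟩
    · intro s₁ _ s₂ _ h
      simp only [hf_def, add_right_inj] at h
      have := mul_right_cancel₀ haz h
      have : (s₁ * t₀ : ℝ) = s₂ * t₀ := by exact_mod_cast this
      exact mul_right_cancel₀ (ne_of_gt ht₀pos) this
    · rintro w ⟨s, ⟨h0, h1⟩, rfl⟩
      exact hIn _ (mul_nonneg h0 ht₀pos.le)
        (by simpa using (mul_lt_mul_of_pos_right h1 ht₀pos))
    · show f (1 * t₀) = b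
      rw [one_mul]
  · have : a - b = ((1 - t₀ : ℝ) : ℂ) * (a - z) := by
      simp only [hb_def, hf_def]
      push_cast
      ring
    calc dist a b = ‖a - b‖ := dist_eq_norm a b
      _ = |1 - t₀| * ‖a - z‖ := by rw [this, norm_mul, Complex.norm_real, Real.norm_eq_abs]
      _ ≤ 1 * ‖a - z‖ := by
          apply mul_le_mul_of_nonneg_right _ (norm_nonneg _)
          rw [abs_le]; constructor <;> linarith
      _ = dist a z := by rw [one_mul, ← dist_eq_norm]
      _ < ε := hz
end
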